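/- arXiv:1912.07957 — 3 statements merged into one kernel-verified Lean document; each statement's English description precedes it below -/
import Mathlib

section
/- If two equilateral L-shapes (of type ⌞) have corners in distinct grid boxes (r₁,c₁) and (r₂,c₂) with r₁,r₂,c₁,c₂ all ≡ 0 (mod 3), where the grid has square boxes of side length s and each L has both arm lengths in [s, 2s), then the two L-shapes are disjoint (do not intersect). -/
/-- An L-shape of type ⌞ given by its corner `(xc, yc)`, horizontal tip x-coordinate `xh`
and vertical tip y-coordinate `yv`. -/
structure LShape where
  xc : ℝ
  yc : ℝ
  xh : ℝ
  yv : ℝ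
  hx : xc ≤ xh
  hy : yc ≤ yv

/-- The point set of a type-⌞ L-shape. -/
def LShape.pts (l : LShape) : Set (ℝ × ℝ) :=
  {p | (p.2 = l.yc ∧ l.xc ≤ p.1 ∧ p.1 ≤ l.xh) ∨ (p.1 = l.xc ∧ l.yc ≤ p.2 ∧ p.2 ≤ l.yv)}

/-- The corner of `l` lies inside the half-open grid box `(r, c)` of side length `s`. -/
def InBox (s : ℝ) (r c : ℤ) (l : LShape) : Prop :=
  (c : ℝ) * s ≤ l.xc ∧ l.xc < ((c : ℝ) + 1) * s ∧ (r : ℝ) * s ≤ l.yc ∧ l.yc < ((r : ℝ) + 1) * s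


/-- Any point of an L-shape whose corner is in box `(r,c)` and whose arms are `< 2s`
lies in the `3s × 3s` block starting at `(c*s, r*s)`. -/
lemma LShape.pts_bound (s : ℝ) (r c : ℤ) (l : LShape)
    (h : InBox s r c l) (ha : l.xh - l.xc < 2 * s) (hb : l.yv - l.yc < 2 * s)
    {p : ℝ × ℝ} (hp : p ∈ l.pts) :
    (c : ℝ) * s ≤ p.1 ∧ p.1 < ((c : ℝ) + 3) * s ∧
    (r : ℝ) * s ≤ p.2 ∧ p.2 < ((r : ℝ) + 3) * s := by
  obtain ⟨hc1, hc2, hr1, hr2⟩ := h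
  have e1 : ((c : ℝ) + 3) * s = ((c : ℝ) + 1) * s + 2 * s := by ring
  have e2 : ((r : ℝ) + 3) * s = ((r : ℝ) + 1) * s + 2 * s := by ring
  have hx := l.hx
  have hy := l.hy
  rcases hp with ⟨h0, h1, h2⟩ | ⟨h0, h1, h2⟩ <;>
    refine ⟨by linarith, by linarith, by linarith, by linarith⟩

/-- If two L-shapes of type ⌞ have both arm lengths in `[s, 2s)` and their corners lie in
distinct grid boxes `(r₁, c₁) ≠ (r₂, c₂)` with all of `r₁, c₁, r₂, c₂ ≡ 0 (mod 3)`, then the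
two L-shapes are disjoint. -/
theorem stmt0 (s : ℝ) (hs : 0 < s) (l₁ l₂ : LShape) (r₁ c₁ r₂ c₂ : ℤ)
    (h1 : InBox s r₁ c₁ l₁) (h2 : InBox s r₂ c₂ l₂)
    (hr₁ : r₁ % 3 = 0) (hc₁ : c₁ % 3 = 0) (hr₂ : r₂ % 3 = 0) (hc₂ : c₂ % 3 = 0)
    (hne : (r₁, c₁) ≠ (r₂, c₂))
    (ha₁ : s ≤ l₁.xh - l₁.xc ∧ l₁.xh - l₁.xc < 2 * s)
    (hb₁ : s ≤ l₁.yv - l₁.yc ∧ l₁.yv - l₁.yc < 2 * s)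
    (ha₂ : s ≤ l₂.xh - l₂.xc ∧ l₂.xh - l₂.xc < 2 * s)
    (hb₂ : s ≤ l₂.yv - l₂.yc ∧ l₂.yv - l₂.yc < 2 * s) :
    l₁.pts ∩ l₂.pts = ∅ := by
  ext p
  simp only [Set.mem_inter_iff, Set.mem_empty_iff_false, iff_false]
  rintro ⟨hp1, hp2⟩
  obtain ⟨b1x, b1x', b1y, b1y'⟩ := LShape.pts_bound s r₁ c₁ l₁ h1 ha₁.2 hb₁.2 hp1
  obtain ⟨b2x, b2x', b2y, b2y'⟩ := LShape.pts_bound s r₂ c₂ l₂ h2 ha₂.2 hb₂.2 hp2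
  have hne' : r₁ ≠ r₂ ∨ c₁ ≠ c₂ := by
    by_contra h
    push_neg at h
    exact hne (by rw [h.1, h.2])
  rcases hne' with h | h
  · have hZ : r₁ + 3 ≤ r₂ ∨ r₂ + 3 ≤ r₁ := by omega
    rcases hZ with hZ | hZ
    · have : ((r₁ : ℝ) + 3) * s ≤ (r₂ : ℝ) * s := by
        apply mul_le_mul_of_nonneg_right _ hs.le
        exact_mod_cast hZ
      linarith
    · have : ((r₂ : ℝ) + 3) * s ≤ (r₁ : ℝ) * s := by
        apply mul_le_mul_of_nonneg_right _ hs.le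
        exact_mod_cast hZ
      linarith
  · have hZ : c₁ + 3 ≤ c₂ ∨ c₂ + 3 ≤ c₁ := by omega
    rcases hZ with hZ | hZ
    · have : ((c₁ : ℝ) + 3) * s ≤ (c₂ : ℝ) * s := by
        apply mul_le_mul_of_nonneg_right _ hs.le
        exact_mod_cast hZ
      linarith
    · have : ((c₂ : ℝ) + 3) * s ≤ (c₁ : ℝ) * s := by
        apply mul_le_mul_of_nonneg_right _ hs.le
        exact_mod_cast hZ
      linarith
end

section
/- Let S be a finite set of type-⌞ L-shapes, all with arm lengths in [s, 2s) for some s > 0, whose corners all lie in a single half-open square box [c·s,(c+1)·s) × [r·s,(r+1)·s), and assume distinct L-shapes have distinct corner x-coordinates and distinct corner y-coordinates. Then the intersection graph of S is a permutation graph. -/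
/-- The intersection graph of a finite set of L-shapes. -/
def interGraph (S : Finset LShape) : SimpleGraph {l : LShape // l ∈ S} where
  Adj a b := a ≠ b ∧ ((a : LShape).pts ∩ (b : LShape).pts).Nonempty
  symm := by
    constructor
    rintro a b ⟨h1, h2⟩
    exact ⟨h1.symm, by rwa [Set.inter_comm]⟩
  loopless := by
    constructor
    rintro a ⟨h1, -⟩
    exact h1 rfl

/-- The inversion graph of a permutation `π` of `{1, …, n}`: edges are the inversions,
i.e. pairs `(i, j)` with `(i - j) * (π⁻¹ i - π⁻¹ j) < 0`. -/
def invGraph {n : ℕ} (π : Equiv.Perm (Fin n)) : SimpleGraph (Fin n) where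
  Adj i j := ((i : ℤ) - (j : ℤ)) * ((π.symm i : ℤ) - (π.symm j : ℤ)) < 0
  symm := by
    constructor
    intro i j h
    have e : ((j : ℤ) - (i : ℤ)) * ((π.symm j : ℤ) - (π.symm i : ℤ))
        = ((i : ℤ) - (j : ℤ)) * ((π.symm i : ℤ) - (π.symm j : ℤ)) := by ring
    linarith
  loopless := by
    constructor
    intro i h
    simp at h

/-- A graph is a permutation graph if it is isomorphic to the inversion graph of
some permutation. -/
def IsPermutationGraph {V : Type*} (G : SimpleGraph V) : Prop :=
  ∃ (n : ℕ) (π : Equiv.Perm (Fin n)), Nonempty (G ≃g invGraph π)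


lemma cross_mem (s : ℝ) (r c : ℤ) (a b : LShape)
    (ha : InBox s r c a) (hb : InBox s r c b)
    (harma : s ≤ a.xh - a.xc) (harmb : s ≤ b.yv - b.yc)
    (h1 : a.xc ≤ b.xc) (h2 : b.yc ≤ a.yc) :
    ((b.xc, a.yc) : ℝ × ℝ) ∈ a.pts ∩ b.pts := by
  obtain ⟨hax, hax', hay, hay'⟩ := ha
  obtain ⟨hbx, hbx', hby, hby'⟩ := hb
  have e1 : ((c : ℝ) + 1) * s = (c : ℝ) * s + s := by ring
  have e2 : ((r : ℝ) + 1) * s = (r : ℝ) * s + s := by ring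
  constructor
  · left
    exact ⟨rfl, h1, by dsimp; linarith⟩
  · right
    exact ⟨rfl, h2, by dsimp; linarith⟩

lemma inter_cases (a b : LShape) (hx : a.xc ≠ b.xc) (hy : a.yc ≠ b.yc)
    (h : (a.pts ∩ b.pts).Nonempty) :
    (a.xc ≤ b.xc ∧ b.yc ≤ a.yc) ∨ (b.xc ≤ a.xc ∧ a.yc ≤ b.yc) := by
  obtain ⟨p, hpa, hpb⟩ := h
  rcases hpa with ⟨e1, l1, u1⟩ | ⟨e1, l1, u1⟩ <;>
    rcases hpb with ⟨e2, l2, u2⟩ | ⟨e2, l2, u2⟩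
  · exact absurd (e1 ▸ e2) hy
  · exact Or.inl ⟨e2 ▸ l1, e1 ▸ l2⟩
  · exact Or.inr ⟨e1 ▸ l2, e2 ▸ l1⟩
  · exact absurd (e1 ▸ e2) hx

/-- Let `S` be a finite set of type-⌞ L-shapes, all with arm lengths in `[s, 2s)`, whose
corners all lie in the single half-open grid box `(r, c)` of side `s`, with pairwise
distinct corner x-coordinates and pairwise distinct corner y-coordinates.  Then the
intersection graph of `S` is a permutation graph. -/
theorem stmt9 (s : ℝ) (hs : 0 < s) (r c : ℤ) (S : Finset LShape)
    (harm : ∀ l ∈ S, (s ≤ l.xh - l.xc ∧ l.xh - l.xc < 2 * s) ∧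
      (s ≤ l.yv - l.yc ∧ l.yv - l.yc < 2 * s))
    (hbox : ∀ l ∈ S, InBox s r c l)
    (hxd : ∀ l₁ ∈ S, ∀ l₂ ∈ S, l₁ ≠ l₂ → l₁.xc ≠ l₂.xc)
    (hyd : ∀ l₁ ∈ S, ∀ l₂ ∈ S, l₁ ≠ l₂ → l₁.yc ≠ l₂.yc) :
    IsPermutationGraph (interGraph S) := by
  classical
  set n := S.card with hn
  have hxinj : Set.InjOn LShape.xc S := by
    intro a ha b hb h
    by_contra hne
    exact hxd a ha b hb hne h
  have hyinj : Set.InjOn LShape.yc S := by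
    intro a ha b hb h
    by_contra hne
    exact hyd a ha b hb hne h
  set Sx := S.image LShape.xc with hSx
  set Sy := S.image LShape.yc with hSy
  have hcx : Sx.card = n := Finset.card_image_of_injOn hxinj
  have hcy : Sy.card = n := Finset.card_image_of_injOn hyinj
  let ox : Fin n ≃o Sx := Sx.orderIsoOfFin hcx
  let oy : Fin n ≃o Sy := Sy.orderIsoOfFin hcy
  let gx : {l : LShape // l ∈ S} → Sx := fun a => ⟨a.1.xc, Finset.mem_image_of_mem _ a.2⟩
  let gy : {l : LShape // l ∈ S} → Sy := fun a => ⟨a.1.yc, Finset.mem_image_of_mem _ a.2⟩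
  have hgx : Function.Bijective gx := by
    constructor
    · intro a b h
      exact Subtype.ext (hxinj a.2 b.2 (congrArg Subtype.val h))
    · rintro ⟨x, hx⟩
      obtain ⟨l, hl, rfl⟩ := Finset.mem_image.mp hx
      exact ⟨⟨l, hl⟩, rfl⟩
  have hgy : Function.Bijective gy := by
    constructor
    · intro a b h
      exact Subtype.ext (hyinj a.2 b.2 (congrArg Subtype.val h))
    · rintro ⟨y, hy⟩
      obtain ⟨l, hl, rfl⟩ := Finset.mem_image.mp hy
      exact ⟨⟨l, hl⟩, rfl⟩
  let eX : {l : LShape // l ∈ S} ≃ Fin n := (Equiv.ofBijective gx hgx).trans ox.toEquiv.symm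
  let eY : {l : LShape // l ∈ S} ≃ Fin n := (Equiv.ofBijective gy hgy).trans oy.toEquiv.symm
  have heX : ∀ a b, eX a < eX b ↔ a.1.xc < b.1.xc := by
    intro a b
    have : eX a < eX b ↔ gx a < gx b := by
      constructor
      · intro h
        have := ox.strictMono h
        simpa [eX] using this
      · intro h
        have := ox.symm.strictMono h
        simpa [eX] using this
    rw [this]
    rfl
  have heY : ∀ a b, eY a < eY b ↔ a.1.yc < b.1.yc := by
    intro a b
    have : eY a < eY b ↔ gy a < gy b := by
      constructor
      · intro h
        have := oy.strictMono h
        simpa [eY] using this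
      · intro h
        have := oy.symm.strictMono h
        simpa [eY] using this
    rw [this]
    rfl
  let π : Equiv.Perm (Fin n) := eY.symm.trans eX
  refine ⟨n, π, ⟨⟨eX, ?_⟩⟩⟩
  intro a b
  have hπ : ∀ z : {l : LShape // l ∈ S}, π.symm (eX z) = eY z := by
    intro z
    show eY (eX.symm (eX z)) = eY z
    rw [Equiv.symm_apply_apply]
  show (((eX a : Fin n) : ℤ) - ((eX b : Fin n) : ℤ)) *
      ((π.symm (eX a) : ℤ) - (π.symm (eX b) : ℤ)) < 0 ↔ (interGraph S).Adj a b
  rw [hπ a, hπ b]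
  have hfin : ∀ i j : Fin n, (i : ℤ) < (j : ℤ) ↔ i < j := by
    intro i j
    rw [Fin.lt_def]
    exact Int.ofNat_lt
  constructor
  · intro h
    rcases mul_neg_iff.mp h with ⟨h1, h2⟩ | ⟨h1, h2⟩
    · have hx : eX b < eX a := (hfin _ _).mp (by linarith)
      have hy : eY a < eY b := (hfin _ _).mp (by linarith)
      have hxc := (heX b a).mp hx
      have hyc := (heY a b).mp hy
      have hne : a ≠ b := fun e => by subst e; exact lt_irrefl _ hxc
      refine ⟨hne, ⟨(a.1.xc, b.1.yc), ?_⟩⟩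
      have := cross_mem s r c b.1 a.1 (hbox _ b.2) (hbox _ a.2)
        ((harm _ b.2).1.1 ) ((harm _ a.2).2.1) hxc.le hyc.le
      rw [Set.inter_comm]
      exact this
    · have hx : eX a < eX b := (hfin _ _).mp (by linarith)
      have hy : eY b < eY a := (hfin _ _).mp (by linarith)
      have hxc := (heX a b).mp hx
      have hyc := (heY b a).mp hy
      have hne : a ≠ b := fun e => by subst e; exact lt_irrefl _ hxc
      refine ⟨hne, ⟨(b.1.xc, a.1.yc), ?_⟩⟩
      exact cross_mem s r c a.1 b.1 (hbox _ a.2) (hbox _ b.2)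
        ((harm _ a.2).1.1) ((harm _ b.2).2.1) hxc.le hyc.le
  · rintro ⟨hne, hint⟩
    have hne' : a.1 ≠ b.1 := fun e => hne (Subtype.ext e)
    have hxne := hxd a.1 a.2 b.1 b.2 hne'
    have hyne := hyd a.1 a.2 b.1 b.2 hne'
    rcases inter_cases a.1 b.1 hxne hyne hint with ⟨h1, h2⟩ | ⟨h1, h2⟩
    · have hx : eX a < eX b := (heX a b).mpr (lt_of_le_of_ne h1 hxne)
      have hy : eY b < eY a := (heY b a).mpr (lt_of_le_of_ne h2 (Ne.symm hyne))
      have hx' := (hfin _ _).mpr hx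
      have hy' := (hfin _ _).mpr hy
      exact mul_neg_of_neg_of_pos (by linarith) (by linarith)
    · have hx : eX b < eX a := (heX b a).mpr (lt_of_le_of_ne h1 (Ne.symm hxne))
      have hy : eY a < eY b := (heY a b).mpr (lt_of_le_of_ne h2 hyne)
      have hx' := (hfin _ _).mpr hx
      have hy' := (hfin _ _).mpr hy
      exact mul_neg_of_pos_of_neg (by linarith) (by linarith)
end

section
/- Let 𝓛 be a finite set of type-⌞ L-shapes all having both arm lengths equal to a common value a > 0, with pairwise distinct corner x-coordinates and pairwise distinct corner y-coordinates. Partition the plane into square boxes of side a and partition 𝓛 into four classes S_{k_r,k_c} (k_r, k_c ∈ {0,1}) according to the parities of the row and column indices of the box containing each corner. Then within each class, L-shapes whose corners lie in distinct boxes are disjoint, and the intersection graph of the L-shapes whose corners lie in any single box is a permutation graph. Consequently α(G(𝓛)) ≤ α(G[S_{0,0}]) + α(G[S_{0,1}]) + α(G[S_{1,0}]) + α(G[S_{1,1}]) ≤ 4 · max_{k_r,k_c} α(G[S_{k_r,k_c}]). -/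
/-- The row index of the side-`a` grid box containing the corner of `l`. -/
noncomputable def boxRow (a : ℝ) (l : LShape) : ℤ := ⌊l.yc / a⌋

/-- The column index of the side-`a` grid box containing the corner of `l`. -/
noncomputable def boxCol (a : ℝ) (l : LShape) : ℤ := ⌊l.xc / a⌋

/-- A finite set of type-⌞ L-shapes is independent if its members are pairwise disjoint. -/
def IndepL (t : Finset LShape) : Prop :=
  ∀ l₁ ∈ t, ∀ l₂ ∈ t, l₁ ≠ l₂ → l₁.pts ∩ l₂.pts = ∅

/-- The maximum size of an independent subset of a finite set of type-⌞ L-shapes. -/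
noncomputable def alphaL (S : Finset LShape) : ℕ := by
  classical exact S.powerset.sup fun t => if IndepL t then t.card else 0

/-- The class of members of `L` whose corner box has row index `≡ kr` and column index
`≡ kc (mod 2)`. -/
noncomputable def cls (a : ℝ) (L : Finset LShape) (kr kc : ℤ) : Finset LShape :=
  L.filter fun l => boxRow a l % 2 = kr ∧ boxCol a l % 2 = kc


section Aux

/-- If two L-shapes with arm lengths `a` intersect, their corners are close. -/
lemma aux_close {a : ℝ} {l1 l2 : LShape} (h1x : l1.xh = l1.xc + a) (h1y : l1.yv = l1.yc + a)
    (h2x : l2.xh = l2.xc + a) (h2y : l2.yv = l2.yc + a) {p : ℝ × ℝ}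
    (hp : p ∈ l1.pts ∩ l2.pts) :
    l1.xc - l2.xc ≤ a ∧ l2.xc - l1.xc ≤ a ∧ l1.yc - l2.yc ≤ a ∧ l2.yc - l1.yc ≤ a := by
  have ha1 := l1.hx
  have ha2 := l1.hy
  obtain ⟨hp1, hp2⟩ := hp
  simp only [LShape.pts, Set.mem_setOf_eq] at hp1 hp2
  rcases hp1 with ⟨e1, f1, g1⟩ | ⟨e1, f1, g1⟩ <;> rcases hp2 with ⟨e2, f2, g2⟩ | ⟨e2, f2, g2⟩ <;>
    exact ⟨by linarith, by linarith, by linarith, by linarith⟩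

lemma aux_mono_disjoint {l1 l2 : LShape} (hx : l1.xc < l2.xc) (hy : l1.yc < l2.yc) :
    l1.pts ∩ l2.pts = ∅ := by
  apply Set.eq_empty_iff_forall_notMem.mpr
  rintro p ⟨hp1, hp2⟩
  simp only [LShape.pts, Set.mem_setOf_eq] at hp1 hp2
  rcases hp1 with ⟨e1, f1, g1⟩ | ⟨e1, f1, g1⟩ <;> rcases hp2 with ⟨e2, f2, g2⟩ | ⟨e2, f2, g2⟩ <;>
    linarith

lemma aux_floor_close {a x y : ℝ} (ha : 0 < a) (h : ⌊x / a⌋ = ⌊y / a⌋) :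
    x - y < a ∧ y - x < a := by
  have h1 := Int.floor_le (x / a)
  have h2 := Int.lt_floor_add_one (x / a)
  have h3 := Int.floor_le (y / a)
  have h4 := Int.lt_floor_add_one (y / a)
  rw [h] at h1 h2
  have e1 : (x - y) / a < 1 := by rw [sub_div]; linarith
  have e2 : (y - x) / a < 1 := by rw [sub_div]; linarith
  exact ⟨(div_lt_one ha).mp e1, (div_lt_one ha).mp e2⟩

/-- Two same-box L-shapes intersect iff the orders of their corner coordinates disagree. -/
lemma aux_inter_iff {a : ℝ} (ha : 0 < a) {l1 l2 : LShape}
    (h1x : l1.xh = l1.xc + a) (h1y : l1.yv = l1.yc + a)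
    (h2x : l2.xh = l2.xc + a) (h2y : l2.yv = l2.yc + a)
    (hbx : ⌊l1.xc / a⌋ = ⌊l2.xc / a⌋) (hby : ⌊l1.yc / a⌋ = ⌊l2.yc / a⌋)
    (hx : l1.xc ≠ l2.xc) (hy : l1.yc ≠ l2.yc) :
    (l1.pts ∩ l2.pts).Nonempty ↔ (l1.xc - l2.xc) * (l1.yc - l2.yc) < 0 := by
  obtain ⟨cx1, cx2⟩ := aux_floor_close ha hbx
  obtain ⟨cy1, cy2⟩ := aux_floor_close ha hby
  constructor
  · rintro ⟨p, hp⟩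
    rcases hx.lt_or_gt with h | h <;> rcases hy.lt_or_gt with h' | h'
    · exact absurd (aux_mono_disjoint h h' ▸ hp) (Set.notMem_empty p)
    · exact mul_neg_of_neg_of_pos (by linarith) (by linarith)
    · exact mul_neg_of_pos_of_neg (by linarith) (by linarith)
    · rw [Set.inter_comm] at hp
      exact absurd (aux_mono_disjoint h h' ▸ hp) (Set.notMem_empty p)
  · intro h
    rcases hx.lt_or_gt with hlt | hlt
    · have hylt : l2.yc < l1.yc := by
        rcases hy.lt_or_gt with h' | h'
        · nlinarith
        · exact h'
      exact ⟨(l2.xc, l1.yc), Or.inl ⟨rfl, le_of_lt hlt, by simp only []; linarith⟩,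
        Or.inr ⟨rfl, le_of_lt hylt, by simp only []; linarith⟩⟩
    · have hylt : l1.yc < l2.yc := by
        rcases hy.lt_or_gt with h' | h'
        · exact h'
        · nlinarith
      exact ⟨(l1.xc, l2.yc), Or.inr ⟨rfl, le_of_lt hylt, by simp only []; linarith⟩,
        Or.inl ⟨rfl, le_of_lt hlt, by simp only []; linarith⟩⟩

lemma aux_card_le_alphaL {S t : Finset LShape} (hsub : t ⊆ S) (hind : IndepL t) :
    t.card ≤ alphaL S := by
  classical
  unfold alphaL
  refine le_trans ?_ (Finset.le_sup (Finset.mem_powerset.mpr hsub))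
  rw [if_pos hind]

lemma aux_alphaL_le {S : Finset LShape} {m : ℕ} (h : ∀ t ⊆ S, IndepL t → t.card ≤ m) :
    alphaL S ≤ m := by
  classical
  unfold alphaL
  apply Finset.sup_le
  intro t ht
  split_ifs with h'
  · exact h t (Finset.mem_powerset.mp ht) h'
  · exact Nat.zero_le m

end Aux

/-- Let `L` be a finite set of type-⌞ L-shapes all of whose arm lengths equal `a > 0`, with
pairwise distinct corner x- and y-coordinates.  Partitioning the plane into square boxes of
side `a` and partitioning `L` into the four parity classes `S_{kr,kc}` of the box of the
corner: within a class, L-shapes with corners in distinct boxes are disjoint; the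
intersection graph of the L-shapes with corner in any single box is a permutation graph;
and `α(G(L)) ≤ α(G[S₀₀]) + α(G[S₀₁]) + α(G[S₁₀]) + α(G[S₁₁]) ≤ 4 · max α(G[S_{kr,kc}])`. -/
theorem stmt17 (a : ℝ) (ha : 0 < a) (L : Finset LShape)
    (heq : ∀ l ∈ L, l.xh - l.xc = a ∧ l.yv - l.yc = a)
    (hxd : ∀ l₁ ∈ L, ∀ l₂ ∈ L, l₁ ≠ l₂ → l₁.xc ≠ l₂.xc)
    (hyd : ∀ l₁ ∈ L, ∀ l₂ ∈ L, l₁ ≠ l₂ → l₁.yc ≠ l₂.yc) :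
    (∀ kr kc : ℤ, ∀ l₁ ∈ cls a L kr kc, ∀ l₂ ∈ cls a L kr kc,
        (boxRow a l₁, boxCol a l₁) ≠ (boxRow a l₂, boxCol a l₂) →
        l₁.pts ∩ l₂.pts = ∅) ∧
      (∀ r c : ℤ,
        IsPermutationGraph (interGraph (L.filter fun l => boxRow a l = r ∧ boxCol a l = c))) ∧
      alphaL L ≤ alphaL (cls a L 0 0) + alphaL (cls a L 0 1)
          + alphaL (cls a L 1 0) + alphaL (cls a L 1 1) ∧
      alphaL (cls a L 0 0) + alphaL (cls a L 0 1) + alphaL (cls a L 1 0) + alphaL (cls a L 1 1)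
        ≤ 4 * max (max (alphaL (cls a L 0 0)) (alphaL (cls a L 0 1)))
            (max (alphaL (cls a L 1 0)) (alphaL (cls a L 1 1))) := by
  classical
  have harm : ∀ l ∈ L, l.xh = l.xc + a ∧ l.yv = l.yc + a := by
    intro l hl
    obtain ⟨h1, h2⟩ := heq l hl
    constructor <;> linarith
  have hbnd : ∀ y : ℝ, (⌊y / a⌋ : ℝ) * a ≤ y ∧ y < ((⌊y / a⌋ : ℝ) + 1) * a := by
    intro y
    constructor
    · rw [← le_div_iff₀ ha]
      exact Int.floor_le _
    · rw [← div_lt_iff₀ ha]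
      exact Int.lt_floor_add_one _
  refine ⟨?_, ?_, ?_, ?_⟩
  · -- Part 1: same parity class, distinct boxes => disjoint
    intro kr kc l1 h1 l2 h2 hne
    rw [cls, Finset.mem_filter] at h1 h2
    obtain ⟨hL1, hr1, hc1⟩ := h1
    obtain ⟨hL2, hr2, hc2⟩ := h2
    by_contra hcon
    obtain ⟨p, hp⟩ := Set.nonempty_iff_ne_empty.mpr hcon
    obtain ⟨a1x, a1y⟩ := harm l1 hL1
    obtain ⟨a2x, a2y⟩ := harm l2 hL2
    obtain ⟨c1, c2, c3, c4⟩ := aux_close a1x a1y a2x a2y hp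
    have hfar : boxRow a l1 ≠ boxRow a l2 ∨ boxCol a l1 ≠ boxCol a l2 := by
      by_contra hc
      push_neg at hc
      exact hne (by rw [hc.1, hc.2])
    have key : ∀ r1 r2 : ℤ, r1 % 2 = r2 % 2 → r1 ≠ r2 → ∀ y1 y2 : ℝ,
        (r1 : ℝ) * a ≤ y1 → y1 < ((r1 : ℝ) + 1) * a →
        (r2 : ℝ) * a ≤ y2 → y2 < ((r2 : ℝ) + 1) * a →
        ¬(y1 - y2 ≤ a ∧ y2 - y1 ≤ a) := by
      intro r1 r2 hpar hner y1 y2 b1 b2 b3 b4 ⟨d1, d2⟩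
      rcases lt_or_gt_of_ne hner with hlt | hlt
      · have : r1 + 2 ≤ r2 := by omega
        have : (r1 : ℝ) + 2 ≤ (r2 : ℝ) := by exact_mod_cast this
        nlinarith
      · have : r2 + 2 ≤ r1 := by omega
        have : (r2 : ℝ) + 2 ≤ (r1 : ℝ) := by exact_mod_cast this
        nlinarith
    rcases hfar with hf | hf
    · exact key (boxRow a l1) (boxRow a l2) (hr1.trans hr2.symm) hf l1.yc l2.yc
        (hbnd l1.yc).1 (hbnd l1.yc).2 (hbnd l2.yc).1 (hbnd l2.yc).2 ⟨c3, c4⟩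
    · exact key (boxCol a l1) (boxCol a l2) (hc1.trans hc2.symm) hf l1.xc l2.xc
        (hbnd l1.xc).1 (hbnd l1.xc).2 (hbnd l2.xc).1 (hbnd l2.xc).2 ⟨c1, c2⟩
  · -- Part 2: one box => permutation graph
    intro r c
    set T := L.filter fun l => boxRow a l = r ∧ boxCol a l = c with hT
    have hTL : ∀ l ∈ T, l ∈ L := fun l hl => (Finset.mem_filter.mp hl).1
    have hxinj : Function.Injective (fun v : {l : LShape // l ∈ T} => v.1.xc) := by
      intro u v h
      by_contra hne
      have hne' : u.1 ≠ v.1 := fun e => hne (Subtype.ext e)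
      exact hxd u.1 (hTL _ u.2) v.1 (hTL _ v.2) hne' h
    have hyinj : Function.Injective (fun v : {l : LShape // l ∈ T} => v.1.yc) := by
      intro u v h
      by_contra hne
      have hne' : u.1 ≠ v.1 := fun e => hne (Subtype.ext e)
      exact hyd u.1 (hTL _ u.2) v.1 (hTL _ v.2) hne' h
    have hcard : Fintype.card {l : LShape // l ∈ T} = T.card := Fintype.card_coe T
    obtain ⟨ex, hex⟩ : ∃ e : Fin T.card ≃ {l : LShape // l ∈ T},
        ∀ i j, i < j ↔ (e i).1.xc < (e j).1.xc := by
      letI : LinearOrder {l : LShape // l ∈ T} := LinearOrder.lift' _ hxinj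
      exact ⟨(monoEquivOfFin _ hcard).toEquiv, fun i j =>
        ((monoEquivOfFin _ hcard).lt_iff_lt (x := i) (y := j)).symm⟩
    obtain ⟨ey, hey⟩ : ∃ e : Fin T.card ≃ {l : LShape // l ∈ T},
        ∀ i j, i < j ↔ (e i).1.yc < (e j).1.yc := by
      letI : LinearOrder {l : LShape // l ∈ T} := LinearOrder.lift' _ hyinj
      exact ⟨(monoEquivOfFin _ hcard).toEquiv, fun i j =>
        ((monoEquivOfFin _ hcard).lt_iff_lt (x := i) (y := j)).symm⟩
    refine ⟨T.card, ey.trans ex.symm, ⟨⟨ex.symm, ?_⟩⟩⟩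
    intro u v
    have hsymm : ∀ w : {l : LShape // l ∈ T},
        (ey.trans ex.symm).symm (ex.symm w) = ey.symm w := by
      intro w
      rw [Equiv.symm_trans_apply, Equiv.symm_symm, Equiv.apply_symm_apply]
    show ((ex.symm u : ℤ) - (ex.symm v : ℤ)) *
        (((ey.trans ex.symm).symm (ex.symm u) : ℤ) - ((ey.trans ex.symm).symm (ex.symm v) : ℤ))
        < 0 ↔ (interGraph T).Adj u v
    rw [hsymm u, hsymm v]
    have finlt : ∀ i j : Fin T.card, ((i : ℤ) < (j : ℤ)) ↔ i < j := by
      intro i j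
      rw [Fin.lt_def]
      exact Nat.cast_lt
    have hx' : ∀ w z : {l : LShape // l ∈ T},
        (ex.symm w < ex.symm z) ↔ w.1.xc < z.1.xc := by
      intro w z
      simpa using hex (ex.symm w) (ex.symm z)
    have hy' : ∀ w z : {l : LShape // l ∈ T},
        (ey.symm w < ey.symm z) ↔ w.1.yc < z.1.yc := by
      intro w z
      simpa using hey (ey.symm w) (ey.symm z)
    have transfer : (((ex.symm u : ℤ) - (ex.symm v : ℤ)) *
        ((ey.symm u : ℤ) - (ey.symm v : ℤ)) < 0) ↔
        ((u.1.xc - v.1.xc) * (u.1.yc - v.1.yc) < 0) := by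
      have A : (0 : ℤ) < (ex.symm u : ℤ) - (ex.symm v : ℤ) ↔ (0 : ℝ) < u.1.xc - v.1.xc := by
        rw [sub_pos, sub_pos, finlt, hx']
      have B : (ex.symm u : ℤ) - (ex.symm v : ℤ) < 0 ↔ u.1.xc - v.1.xc < 0 := by
        rw [sub_neg, sub_neg, finlt, hx']
      have C : (0 : ℤ) < (ey.symm u : ℤ) - (ey.symm v : ℤ) ↔ (0 : ℝ) < u.1.yc - v.1.yc := by
        rw [sub_pos, sub_pos, finlt, hy']
      have D : (ey.symm u : ℤ) - (ey.symm v : ℤ) < 0 ↔ u.1.yc - v.1.yc < 0 := by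
        rw [sub_neg, sub_neg, finlt, hy']
      rw [mul_neg_iff, mul_neg_iff, A, B, C, D]
    rw [transfer]
    constructor
    · intro h
      have hne : u ≠ v := by
        rintro rfl
        simp at h
      have hne' : u.1 ≠ v.1 := fun e => hne (Subtype.ext e)
      obtain ⟨a1x, a1y⟩ := harm u.1 (hTL _ u.2)
      obtain ⟨a2x, a2y⟩ := harm v.1 (hTL _ v.2)
      have hbu := (Finset.mem_filter.mp u.2).2
      have hbv := (Finset.mem_filter.mp v.2).2
      refine ⟨hne, (aux_inter_iff ha a1x a1y a2x a2y ?_ ?_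
        (hxd u.1 (hTL _ u.2) v.1 (hTL _ v.2) hne')
        (hyd u.1 (hTL _ u.2) v.1 (hTL _ v.2) hne')).mpr h⟩
      · show boxCol a u.1 = boxCol a v.1
        rw [hbu.2, hbv.2]
      · show boxRow a u.1 = boxRow a v.1
        rw [hbu.1, hbv.1]
    · rintro ⟨hne, hint⟩
      have hne' : u.1 ≠ v.1 := fun e => hne (Subtype.ext e)
      obtain ⟨a1x, a1y⟩ := harm u.1 (hTL _ u.2)
      obtain ⟨a2x, a2y⟩ := harm v.1 (hTL _ v.2)
      have hbu := (Finset.mem_filter.mp u.2).2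
      have hbv := (Finset.mem_filter.mp v.2).2
      refine (aux_inter_iff ha a1x a1y a2x a2y ?_ ?_
        (hxd u.1 (hTL _ u.2) v.1 (hTL _ v.2) hne')
        (hyd u.1 (hTL _ u.2) v.1 (hTL _ v.2) hne')).mp hint
      · show boxCol a u.1 = boxCol a v.1
        rw [hbu.2, hbv.2]
      · show boxRow a u.1 = boxRow a v.1
        rw [hbu.1, hbv.1]
  · -- Part 3
    apply aux_alphaL_le
    intro t hsub hind
    have cover : t ⊆ (t.filter fun l => boxRow a l % 2 = 0 ∧ boxCol a l % 2 = 0)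
        ∪ (t.filter fun l => boxRow a l % 2 = 0 ∧ boxCol a l % 2 = 1)
        ∪ (t.filter fun l => boxRow a l % 2 = 1 ∧ boxCol a l % 2 = 0)
        ∪ (t.filter fun l => boxRow a l % 2 = 1 ∧ boxCol a l % 2 = 1) := by
      intro l hl
      simp only [Finset.mem_union, Finset.mem_filter]
      have h2 : boxRow a l % 2 = 0 ∨ boxRow a l % 2 = 1 := Int.emod_two_eq_zero_or_one _
      have h3 : boxCol a l % 2 = 0 ∨ boxCol a l % 2 = 1 := Int.emod_two_eq_zero_or_one _
      rcases h2 with h2 | h2 <;> rcases h3 with h3 | h3 <;> tauto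
    have hcard1 := Finset.card_le_card cover
    have hu1 := Finset.card_union_le
      ((t.filter fun l => boxRow a l % 2 = 0 ∧ boxCol a l % 2 = 0)
        ∪ (t.filter fun l => boxRow a l % 2 = 0 ∧ boxCol a l % 2 = 1)
        ∪ (t.filter fun l => boxRow a l % 2 = 1 ∧ boxCol a l % 2 = 0))
      (t.filter fun l => boxRow a l % 2 = 1 ∧ boxCol a l % 2 = 1)
    have hu2 := Finset.card_union_le
      ((t.filter fun l => boxRow a l % 2 = 0 ∧ boxCol a l % 2 = 0)
        ∪ (t.filter fun l => boxRow a l % 2 = 0 ∧ boxCol a l % 2 = 1))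
      (t.filter fun l => boxRow a l % 2 = 1 ∧ boxCol a l % 2 = 0)
    have hu3 := Finset.card_union_le
      (t.filter fun l => boxRow a l % 2 = 0 ∧ boxCol a l % 2 = 0)
      (t.filter fun l => boxRow a l % 2 = 0 ∧ boxCol a l % 2 = 1)
    have hsf : ∀ kr kc : ℤ,
        (t.filter fun l => boxRow a l % 2 = kr ∧ boxCol a l % 2 = kc) ⊆ cls a L kr kc := by
      intro kr kc l hl
      rw [Finset.mem_filter] at hl
      rw [cls, Finset.mem_filter]
      exact ⟨hsub hl.1, hl.2⟩
    have hindf : ∀ kr kc : ℤ,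
        IndepL (t.filter fun l => boxRow a l % 2 = kr ∧ boxCol a l % 2 = kc) := by
      intro kr kc l1 h1 l2 h2 hne
      exact hind l1 (Finset.filter_subset _ _ h1) l2 (Finset.filter_subset _ _ h2) hne
    have b00 := aux_card_le_alphaL (hsf 0 0) (hindf 0 0)
    have b01 := aux_card_le_alphaL (hsf 0 1) (hindf 0 1)
    have b10 := aux_card_le_alphaL (hsf 1 0) (hindf 1 0)
    have b11 := aux_card_le_alphaL (hsf 1 1) (hindf 1 1)
    omega
  · -- Part 4
    set A := alphaL (cls a L 0 0)
    set B := alphaL (cls a L 0 1)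
    set C := alphaL (cls a L 1 0)
    set D := alphaL (cls a L 1 1)
    have h1 : A ≤ max (max A B) (max C D) := le_trans (le_max_left A B) (le_max_left _ _)
    have h2 : B ≤ max (max A B) (max C D) := le_trans (le_max_right A B) (le_max_left _ _)
    have h3 : C ≤ max (max A B) (max C D) := le_trans (le_max_left C D) (le_max_right _ _)
    have h4 : D ≤ max (max A B) (max C D) := le_trans (le_max_right C D) (le_max_right _ _)
    omega
end
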